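/- Complex conjugation of reversal: for a primitive m-th root of unity ζ_m, positive integers k_1,...,k_r and roots of unity η_1,...,η_r of modulus 1, the complex conjugate of z_m((η_1,...,η_r);(k_1,...,k_r);ζ_m) equals (-ζ_m)^{-(k_1+...+k_r)} (η_1···η_r)^{-m} · z_m((η_r,...,η_1);(k_r,...,k_1);ζ_m), where z_m is the multiple harmonic sum Σ_{m>m_1>...>m_r>0} Π_j η_j^{m_j}((1-ζ_m)/(1-ζ_m^{m_j}))^{k_j}. -/

import Mathlib

open Finset

/-- The finset of strictly decreasing tuples `m > f 0 > f 1 > ... > f (r-1) > 0`. -/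
def decFull (m r : ℕ) : Finset (Fin r → ℕ) :=
  (Fintype.piFinset fun _ : Fin r => Finset.Ioo 0 m).filter
    fun f => ∀ i j : Fin r, i < j → f j < f i

lemma key13 (m n k : ℕ) (hn0 : 0 < n) (hnm : n < m) (ζ η : ℂ)
    (hζ : IsPrimitiveRoot ζ m) (hη : ‖η‖ = 1) :
    (starRingEnd ℂ) (η ^ n * ((1 - ζ) / (1 - ζ ^ n)) ^ k) =
      ((-ζ) ^ k)⁻¹ * (η ^ m)⁻¹ *
        (η ^ (m - n) * ((1 - ζ) / (1 - ζ ^ (m - n))) ^ k) := by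
  have hm : 0 < m := lt_trans hn0 hnm
  have hz0 : ζ ≠ 0 := hζ.ne_zero hm.ne'
  have hη0 : η ≠ 0 := by
    intro h; rw [h] at hη; simp at hη
  have hζm : ζ ^ m = 1 := hζ.pow_eq_one
  have habs : ‖ζ‖ = 1 := hζ.norm'_eq_one hm.ne'
  have hζn : ζ ^ n ≠ 1 := hζ.pow_ne_one_of_pos_of_lt hn0.ne' hnm
  have hB : (1 : ℂ) - ζ ^ n ≠ 0 := sub_ne_zero.mpr (Ne.symm hζn)
  have hconjz : (starRingEnd ℂ) ζ = ζ⁻¹ := (Complex.inv_eq_conj habs).symm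
  have hconjη : (starRingEnd ℂ) η = η⁻¹ := (Complex.inv_eq_conj hη).symm
  have hzmn : ζ ^ (m - n) = (ζ ^ n)⁻¹ := by
    rw [pow_sub₀ _ hz0 hnm.le, hζm, one_mul]
  have hηmn : η ^ (m - n) = η ^ m * (η ^ n)⁻¹ := pow_sub₀ _ hη0 hnm.le
  have hzn0 : ζ ^ n ≠ 0 := pow_ne_zero _ hz0
  have hX : (1 : ℂ) - (ζ ^ n)⁻¹ ≠ 0 := by
    rw [sub_ne_zero]
    intro h
    exact hζn (by rw [← inv_inv (ζ ^ n), ← h, inv_one])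
  -- second base identity
  have base2 : (1 - ζ) / (1 - ζ ^ (m - n)) = -(ζ ^ n) * ((1 - ζ) / (1 - ζ ^ n)) := by
    rw [hzmn, div_eq_iff hX]
    field_simp [hB]
    ring
  -- first base identity
  have base1 : (starRingEnd ℂ) ((1 - ζ) / (1 - ζ ^ n)) =
      (ζ ^ n * ζ⁻¹) * ((1 - ζ) / (1 - ζ ^ n)) := by
    simp only [map_div₀, map_sub, map_one, map_pow, hconjz, inv_pow]
    rw [div_eq_iff hX]
    field_simp [hB]
    ring
  rw [map_mul, map_pow, map_pow, hconjη, base1, base2, hηmn]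
  have hnegs : ((-ζ) ^ k)⁻¹ * (-(ζ ^ n)) ^ k = (ζ ^ n * ζ⁻¹) ^ k := by
    rw [← inv_pow, ← mul_pow, inv_neg, neg_mul_neg, mul_comm]
  calc η⁻¹ ^ n * ((ζ ^ n * ζ⁻¹) * ((1 - ζ) / (1 - ζ ^ n))) ^ k
      = η⁻¹ ^ n * ((ζ ^ n * ζ⁻¹) ^ k * ((1 - ζ) / (1 - ζ ^ n)) ^ k) := by
        rw [mul_pow]
    _ = η⁻¹ ^ n * ((((-ζ) ^ k)⁻¹ * (-(ζ ^ n)) ^ k) * ((1 - ζ) / (1 - ζ ^ n)) ^ k) := by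
        rw [hnegs]
    _ = ((-ζ) ^ k)⁻¹ * (η ^ m)⁻¹ *
        (η ^ m * (η ^ n)⁻¹ * (-(ζ ^ n) * ((1 - ζ) / (1 - ζ ^ n))) ^ k) := by
        rw [mul_pow (-(ζ ^ n)), inv_pow]
        have hηm : η ^ m ≠ 0 := pow_ne_zero _ hη0
        have hc2 : (η ^ m)⁻¹ * η ^ m = 1 := inv_mul_cancel₀ hηm
        linear_combination
          (-(((-ζ) ^ k)⁻¹ * (η ^ n)⁻¹ * ((-(ζ ^ n)) ^ k * ((1 - ζ) / (1 - ζ ^ n)) ^ k))) * hc2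

/-- Complex conjugation of reversal: for a primitive `m`-th root of unity `ζ`,
`conj z_m((η_1,…,η_r);(k_1,…,k_r);ζ)
  = (-ζ)^{-(k_1+⋯+k_r)} (η_1⋯η_r)^{-m} z_m((η_r,…,η_1);(k_r,…,k_1);ζ)`. -/
theorem stmt13 (m r : ℕ) (hm : 0 < m) (ζ : ℂ) (hζ : IsPrimitiveRoot ζ m)
    (k : Fin r → ℕ) (hk : ∀ i, 0 < k i)
    (η : Fin r → ℂ) (hη : ∀ i, ‖η i‖ = 1) :
    (starRingEnd ℂ)
        (∑ f ∈ decFull m r, ∏ a : Fin r,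
          η a ^ f a * ((1 - ζ) / (1 - ζ ^ f a)) ^ k a) =
      ((-ζ) ^ (∑ a : Fin r, k a))⁻¹ * ((∏ a : Fin r, η a) ^ m)⁻¹ *
        ∑ f ∈ decFull m r, ∏ a : Fin r,
          η (Fin.rev a) ^ f a * ((1 - ζ) / (1 - ζ ^ f a)) ^ k (Fin.rev a) := by
  have hmem : ∀ f, f ∈ decFull m r ↔
      (∀ a, 0 < f a ∧ f a < m) ∧ ∀ i j : Fin r, i < j → f j < f i := by
    intro f
    simp [decFull, Fintype.mem_piFinset, Finset.mem_Ioo]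
  rw [map_sum, Finset.mul_sum]
  refine Finset.sum_nbij' (fun f a => m - f a.rev) (fun f a => m - f a.rev) ?_ ?_ ?_ ?_ ?_
  · intro f hf
    obtain ⟨h1, h2⟩ := (hmem f).mp hf
    refine (hmem _).mpr ⟨fun a => ⟨?_, ?_⟩, fun i j hij => ?_⟩
    · exact Nat.sub_pos_of_lt (h1 a.rev).2
    · exact Nat.sub_lt hm (h1 a.rev).1
    · have := h2 j.rev i.rev (Fin.rev_lt_rev.mpr hij)
      have h3 := (h1 i.rev).2
      have h4 := (h1 j.rev).2
      omega
  · intro f hf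
    obtain ⟨h1, h2⟩ := (hmem f).mp hf
    refine (hmem _).mpr ⟨fun a => ⟨?_, ?_⟩, fun i j hij => ?_⟩
    · exact Nat.sub_pos_of_lt (h1 a.rev).2
    · exact Nat.sub_lt hm (h1 a.rev).1
    · have := h2 j.rev i.rev (Fin.rev_lt_rev.mpr hij)
      have h3 := (h1 i.rev).2
      have h4 := (h1 j.rev).2
      omega
  · intro f hf
    obtain ⟨h1, _⟩ := (hmem f).mp hf
    funext a
    have := (h1 a).2
    simp only [Fin.rev_rev]
    omega
  · intro f hf
    obtain ⟨h1, _⟩ := (hmem f).mp hf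
    funext a
    have := (h1 a).2
    simp only [Fin.rev_rev]
    omega
  · intro f hf
    obtain ⟨h1, _⟩ := (hmem f).mp hf
    rw [map_prod]
    calc ∏ a : Fin r, (starRingEnd ℂ) (η a ^ f a * ((1 - ζ) / (1 - ζ ^ f a)) ^ k a)
        = ∏ a : Fin r, (((-ζ) ^ k a)⁻¹ * (η a ^ m)⁻¹ *
            (η a ^ (m - f a) * ((1 - ζ) / (1 - ζ ^ (m - f a))) ^ k a)) := by
          refine Finset.prod_congr rfl fun a _ => ?_
          exact key13 m (f a) (k a) (h1 a).1 (h1 a).2 ζ (η a) hζ (hη a)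
      _ = (∏ a : Fin r, ((-ζ) ^ k a)⁻¹) * (∏ a : Fin r, (η a ^ m)⁻¹) *
            ∏ a : Fin r, (η a ^ (m - f a) * ((1 - ζ) / (1 - ζ ^ (m - f a))) ^ k a) := by
          rw [Finset.prod_mul_distrib, Finset.prod_mul_distrib]
      _ = ((-ζ) ^ (∑ a : Fin r, k a))⁻¹ * ((∏ a : Fin r, η a) ^ m)⁻¹ *
            ∏ a : Fin r, (η a ^ (m - f a) * ((1 - ζ) / (1 - ζ ^ (m - f a))) ^ k a) := by
          rw [Finset.prod_inv_distrib, Finset.prod_inv_distrib,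
            Finset.prod_pow_eq_pow_sum, Finset.prod_pow]
      _ = ((-ζ) ^ (∑ a : Fin r, k a))⁻¹ * ((∏ a : Fin r, η a) ^ m)⁻¹ *
            ∏ a : Fin r, (η a.rev ^ (m - f a.rev) *
              ((1 - ζ) / (1 - ζ ^ (m - f a.rev))) ^ k a.rev) := by
          congr 1
          exact (Fintype.prod_bijective Fin.rev Fin.rev_bijective _ _ fun a => rfl).symm
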